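/- Let F_{μ,σ} denote the distribution of the normal law N(μ, σ²) on ℝ. Then for all μ₁, μ₂ ∈ ℝ and all σ₁, σ₂ > 0, d_TV(F_{μ₁,σ₁}, F_{μ₂,σ₂}) ≤ √(2/π) · ( |μ₁ − μ₂| / (2·max(σ₁, σ₂)) + max(σ₁, σ₂)/min(σ₁, σ₂) − 1 ). -/

import Mathlib

open MeasureTheory ProbabilityTheory Real Set Filter

lemma abs_split (f : ℝ → ℝ) (hf : Integrable f) :
    ∫ x, |f x| = (∫ x, f x) + 2 * ∫ x, max (-f x) 0 := by
  have h : (fun x => |f x|) = fun x => f x + 2 * max (-f x) 0 := by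
    funext x
    rcases le_total 0 (f x) with h | h
    · simp [abs_of_nonneg h, max_eq_right, neg_nonpos.mpr h]
    · rw [abs_of_nonpos h, max_eq_left (neg_nonneg.mpr h)]; ring
  have h2 : Integrable (fun x => max (-f x) 0) := by
    simpa using hf.neg.pos_part
  rw [show (∫ x, |f x|) = ∫ x, (f x + 2 * max (-f x) 0) from by rw [← h],
    integral_add hf (h2.const_mul 2), MeasureTheory.integral_const_mul]

lemma abs_diff_le_half {f g : ℝ → ℝ} (hf : Integrable f) (hg : Integrable g)
    (h : ∫ x, f x = ∫ x, g x) {A : Set ℝ} (hA : MeasurableSet A) :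
    |(∫ x in A, f x) - ∫ x in A, g x| ≤ (∫ x, |f x - g x|) / 2 := by
  have hd : Integrable (fun x => f x - g x) := hf.sub hg
  have h1 : (∫ x in A, f x) - ∫ x in A, g x = ∫ x in A, (f x - g x) :=
    (integral_sub hf.integrableOn hg.integrableOn).symm
  have h2 : (∫ x in A, (f x - g x)) + ∫ x in Aᶜ, (f x - g x) = 0 := by
    rw [integral_add_compl hA hd, integral_sub hf hg, h, sub_self]
  have h3 : |∫ x in A, (f x - g x)| ≤ ∫ x in A, |f x - g x| := by
    simpa [Real.norm_eq_abs] using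
      norm_integral_le_integral_norm (μ := volume.restrict A) (fun x => f x - g x)
  have h4 : |∫ x in Aᶜ, (f x - g x)| ≤ ∫ x in Aᶜ, |f x - g x| := by
    simpa [Real.norm_eq_abs] using
      norm_integral_le_integral_norm (μ := volume.restrict Aᶜ) (fun x => f x - g x)
  have h5 : (∫ x in A, |f x - g x|) + ∫ x in Aᶜ, |f x - g x| = ∫ x, |f x - g x| :=
    integral_add_compl hA hd.abs
  have h6 : |∫ x in A, (f x - g x)| = |∫ x in Aᶜ, (f x - g x)| := by
    rw [show (∫ x in Aᶜ, (f x - g x)) = -∫ x in A, (f x - g x) from by linarith, abs_neg]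
  rw [h1]; linarith [abs_nonneg (∫ x in A, (f x - g x))]

lemma L1_tri (f g h : ℝ → ℝ) (hf : Integrable f) (hg : Integrable g) (hh : Integrable h) :
    ∫ x, |f x - h x| ≤ (∫ x, |f x - g x|) + ∫ x, |g x - h x| := by
  calc ∫ x, |f x - h x| ≤ ∫ x, (|f x - g x| + |g x - h x|) := by
        refine integral_mono (hf.sub hh).abs ((hf.sub hg).abs.add (hg.sub hh).abs) fun x => ?_
        exact abs_sub_le _ _ _
    _ = _ := integral_add (hf.sub hg).abs (hg.sub hh).abs

lemma L1_le_of_hasDerivAt (F D : ℝ → ℝ → ℝ) (a b : ℝ) (hab : a ≤ b) (C : ℝ) (hC : 0 ≤ C)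
    (hF : ∀ x : ℝ, ∀ t ∈ Icc a b, HasDerivAt (fun u => F u x) (D t x) t)
    (hDcont : ∀ x : ℝ, ContinuousOn (fun t => D t x) (Icc a b))
    (hDmeas : Measurable (Function.uncurry D))
    (hDint : ∀ t ∈ Icc a b, Integrable (D t))
    (hDbound : ∀ t ∈ Icc a b, (∫ x, |D t x|) ≤ C)
    (hFab : Integrable (fun x => F b x - F a x)) :
    (∫ x, |F b x - F a x|) ≤ C * (b - a) := by
  have key : ∀ x, ENNReal.ofReal |F b x - F a x| ≤ ∫⁻ t in Ioc a b, ENNReal.ofReal |D t x| := by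
    intro x
    have hFTC : ∫ t in a..b, D t x = F b x - F a x := by
      apply intervalIntegral.integral_eq_sub_of_hasDerivAt
      · intro t ht
        exact hF x t (by rwa [uIcc_of_le hab] at ht)
      · apply ContinuousOn.intervalIntegrable
        rw [uIcc_of_le hab]
        exact hDcont x
    rw [← hFTC, intervalIntegral.integral_of_le hab]
    calc ENNReal.ofReal |∫ t in Ioc a b, D t x| = ↑‖∫ t in Ioc a b, D t x‖₊ := by
          rw [← Real.norm_eq_abs, ofReal_norm, enorm_eq_nnnorm]
      _ ≤ ∫⁻ t in Ioc a b, ↑‖D t x‖₊ := enorm_integral_le_lintegral_enorm _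
      _ = ∫⁻ t in Ioc a b, ENNReal.ofReal |D t x| := by
          simp_rw [← enorm_eq_nnnorm, ← ofReal_norm, Real.norm_eq_abs]
  have hmeas2 : Measurable (Function.uncurry fun (x t : ℝ) => ENNReal.ofReal |D t x|) := by
    apply ENNReal.measurable_ofReal.comp
    exact (hDmeas.comp measurable_swap).abs
  have swap : (∫⁻ x : ℝ, ∫⁻ t in Ioc a b, ENNReal.ofReal |D t x|)
      ≤ ENNReal.ofReal (C * (b - a)) := by
    rw [lintegral_lintegral_swap hmeas2.aemeasurable]
    have hstep : (∫⁻ t in Ioc a b, ∫⁻ x : ℝ, ENNReal.ofReal |D t x|)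
        ≤ ∫⁻ _t in Ioc a b, ENNReal.ofReal C := by
      apply lintegral_mono_ae
      filter_upwards [ae_restrict_mem measurableSet_Ioc] with t ht
      have ht' : t ∈ Icc a b := ⟨ht.1.le, ht.2⟩
      have h1 : (∫⁻ x : ℝ, ENNReal.ofReal |D t x|) = ENNReal.ofReal (∫ x, |D t x|) :=
        (ofReal_integral_eq_lintegral_ofReal (hDint t ht').abs
          (ae_of_all _ fun x => abs_nonneg _)).symm
      rw [h1]
      exact ENNReal.ofReal_le_ofReal (hDbound t ht')
    refine hstep.trans ?_
    rw [setLIntegral_const, Real.volume_Ioc, ← ENNReal.ofReal_mul hC]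
  have hnn : 0 ≤ᵐ[volume] fun x => |F b x - F a x| := ae_of_all _ fun x => abs_nonneg _
  rw [integral_eq_lintegral_of_nonneg_ae hnn hFab.abs.aestronglyMeasurable]
  refine ENNReal.toReal_le_of_le_ofReal (mul_nonneg hC (by linarith)) ?_
  exact (lintegral_mono key).trans swap

noncomputable def gpdf (m s x : ℝ) : ℝ :=
  (Real.sqrt (2 * Real.pi))⁻¹ * s⁻¹ * Real.exp (-(x - m) ^ 2 / (2 * s ^ 2))

lemma gpdf_eq (m s : ℝ) (hs : 0 < s) :
    gaussianPDFReal m ⟨s ^ 2, sq_nonneg s⟩ = gpdf m s := by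
  funext x
  simp only [gaussianPDFReal, gpdf]
  show (Real.sqrt (2 * π * s ^ 2))⁻¹ * Real.exp (-(x - m) ^ 2 / (2 * s ^ 2)) = _
  rw [show (2 : ℝ) * π * s ^ 2 = (2 * π) * s ^ 2 by ring,
    Real.sqrt_mul (by positivity) (s ^ 2), Real.sqrt_sq hs.le, mul_inv]

lemma exp_arg_eq (s y : ℝ) : -y ^ 2 / (2 * s ^ 2) = -((2 * s ^ 2)⁻¹ * y ^ 2) := by
  ring

lemma gpdf_pos (m s x : ℝ) (hs : 0 < s) : 0 < gpdf m s x := by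
  unfold gpdf; positivity

-- integrability of (x-m)^k * exp
lemma integrable_exp_gauss (m s : ℝ) (hs : 0 < s) :
    Integrable (fun x : ℝ => Real.exp (-(x - m) ^ 2 / (2 * s ^ 2))) := by
  have hb : 0 < (2 * s ^ 2)⁻¹ := by positivity
  have := (integrable_exp_neg_mul_sq hb).comp_sub_right m
  refine this.congr ?_
  filter_upwards with x
  rw [exp_arg_eq, neg_mul]

lemma integrable_lin_gauss (m s t : ℝ) (hs : 0 < s) :
    Integrable (fun x : ℝ => (x - t) * Real.exp (-(x - m) ^ 2 / (2 * s ^ 2))) := by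
  have hb : 0 < (2 * s ^ 2)⁻¹ := by positivity
  have h1 : Integrable (fun x : ℝ => (x - m) * Real.exp (-(x - m) ^ 2 / (2 * s ^ 2))) := by
    have := (integrable_mul_exp_neg_mul_sq hb).comp_sub_right m
    refine this.congr ?_
    filter_upwards with x
    rw [exp_arg_eq, neg_mul]
  have h2 := (integrable_exp_gauss m s hs).const_mul (m - t)
  refine (h1.add h2).congr ?_
  filter_upwards with x
  simp only [Pi.add_apply]
  ring

lemma integrable_sq_gauss (m s : ℝ) (hs : 0 < s) :
    Integrable (fun x : ℝ => (x - m) ^ 2 * Real.exp (-(x - m) ^ 2 / (2 * s ^ 2))) := by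
  have hb : 0 < (2 * s ^ 2)⁻¹ := by positivity
  have h0 : Integrable (fun u : ℝ => u ^ 2 * Real.exp (-(2 * s ^ 2)⁻¹ * u ^ 2)) := by
    have := integrable_rpow_mul_exp_neg_mul_sq hb (s := 2) (by norm_num)
    refine this.congr ?_
    filter_upwards with x
    rw [show ((2 : ℝ) : ℝ) = ((2 : ℕ) : ℝ) by norm_num, Real.rpow_natCast]
  have := h0.comp_sub_right m
  refine this.congr ?_
  filter_upwards with x
  rw [exp_arg_eq, neg_mul]

lemma integral_Ioi_mul_exp (b : ℝ) (hb : 0 < b) :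
    ∫ x in Ioi (0:ℝ), x * Real.exp (-b * x ^ 2) = (2 * b)⁻¹ := by
  have A : ∀ x ∈ Ici (0:ℝ), HasDerivAt (fun y : ℝ => -(2 * b)⁻¹ * Real.exp (-b * y ^ 2))
      (x * Real.exp (-b * x ^ 2)) x := by
    intro x _
    have h1 : HasDerivAt (fun y : ℝ => -b * y ^ 2) (-b * (2 * x ^ 1)) x :=
      ((hasDerivAt_pow 2 x).const_mul (-b))
    have h2 := (h1.exp).const_mul (-(2 * b)⁻¹)
    refine h2.congr_deriv ?_
    field_simp
  have B : Tendsto (fun y : ℝ => -(2 * b)⁻¹ * Real.exp (-b * y ^ 2)) atTop (nhds (-(2 * b)⁻¹ * 0)) := by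
    refine Tendsto.const_mul _ ?_
    apply Real.tendsto_exp_atBot.comp
    exact (tendsto_pow_atTop two_ne_zero).const_mul_atTop_of_neg (neg_lt_zero.2 hb)
  have := integral_Ioi_of_hasDerivAt_of_tendsto' A
    (integrable_mul_exp_neg_mul_sq hb).integrableOn B
  rw [this]
  simp

lemma integral_max_exp (b : ℝ) (hb : 0 < b) :
    ∫ x : ℝ, max x 0 * Real.exp (-b * x ^ 2) = (2 * b)⁻¹ := by
  have hint : Integrable (fun x : ℝ => max x 0 * Real.exp (-b * x ^ 2)) := by
    refine (integrable_mul_exp_neg_mul_sq hb).mono ?_ ?_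
    · apply Measurable.aestronglyMeasurable
      fun_prop
    · filter_upwards with x
      rw [Real.norm_eq_abs, Real.norm_eq_abs, abs_mul, abs_mul]
      have : |max x 0| ≤ |x| := by
        rcases le_total x 0 with h | h
        · simp [max_eq_right h]
        · simp [max_eq_left h]
      exact mul_le_mul_of_nonneg_right this (abs_nonneg _)
  rw [← integral_add_compl (measurableSet_Ioi (a := (0:ℝ))) hint]
  have h1 : ∫ x in Ioi (0:ℝ), max x 0 * Real.exp (-b * x ^ 2)
      = ∫ x in Ioi (0:ℝ), x * Real.exp (-b * x ^ 2) := by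
    apply setIntegral_congr_fun measurableSet_Ioi
    intro x hx
    simp only [max_eq_left (le_of_lt (mem_Ioi.mp hx))]
  have h2 : ∫ x in (Ioi (0:ℝ))ᶜ, max x 0 * Real.exp (-b * x ^ 2) = 0 := by
    rw [compl_Ioi]
    apply integral_eq_zero_of_ae
    filter_upwards [ae_restrict_mem measurableSet_Iic] with x hx
    simp [max_eq_right (mem_Iic.mp hx)]
  rw [h1, h2, integral_Ioi_mul_exp b hb, add_zero]

lemma integrable_gpdf (m s : ℝ) (hs : 0 < s) : Integrable (gpdf m s) := by
  unfold gpdf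
  exact ((integrable_exp_gauss m s hs).const_mul _)

lemma two_K : 2 * (Real.sqrt (2 * Real.pi))⁻¹ = Real.sqrt (2 / Real.pi) := by
  have hpi := Real.pi_pos
  have h2 : Real.sqrt 2 * Real.sqrt 2 = 2 := Real.mul_self_sqrt (by norm_num)
  have hp : (0:ℝ) ≤ 2 := by norm_num
  rw [Real.sqrt_mul hp, Real.sqrt_div hp]
  have hπ : Real.sqrt Real.pi ≠ 0 := by positivity
  have h2' : Real.sqrt 2 ≠ 0 := by positivity
  rw [mul_inv]
  field_simp
  linear_combination -h2

lemma hasDerivAt_gpdf_mean (s x : ℝ) (hs : 0 < s) (t : ℝ) :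
    HasDerivAt (fun u => gpdf u s x) ((x - t) / s ^ 2 * gpdf t s x) t := by
  have h1 : HasDerivAt (fun u : ℝ => x - u) (-1) t := (hasDerivAt_id t).const_sub x
  have h2 := h1.pow 2
  have h3 := (h2.neg.div_const (2 * s ^ 2)).exp
  have h4 := h3.const_mul ((Real.sqrt (2 * Real.pi))⁻¹ * s⁻¹)
  refine h4.congr_deriv ?_
  simp only [Pi.neg_apply, Pi.pow_apply, Pi.div_apply]
  unfold gpdf
  field_simp
  ring

lemma hasDerivAt_gpdf_x (t s : ℝ) (hs : 0 < s) (y : ℝ) :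
    HasDerivAt (fun y => -gpdf t s y) ((y - t) / s ^ 2 * gpdf t s y) y := by
  have h1 : HasDerivAt (fun y : ℝ => y - t) 1 y := (hasDerivAt_id y).sub_const t
  have h2 := h1.pow 2
  have h3 := (h2.neg.div_const (2 * s ^ 2)).exp
  have h4 := (h3.const_mul ((Real.sqrt (2 * Real.pi))⁻¹ * s⁻¹)).neg
  refine h4.congr_deriv ?_
  simp only [Pi.neg_apply, Pi.pow_apply, Pi.div_apply]
  unfold gpdf
  field_simp
  ring

lemma integrable_D_shift (t s : ℝ) (hs : 0 < s) :
    Integrable (fun x : ℝ => (x - t) / s ^ 2 * gpdf t s x) := by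
  have := (integrable_lin_gauss t s t hs).const_mul ((Real.sqrt (2 * Real.pi))⁻¹ * s⁻¹ / s ^ 2)
  refine this.congr ?_
  filter_upwards with x
  unfold gpdf
  ring

lemma integral_D_shift_zero (t s : ℝ) (hs : 0 < s) :
    ∫ x : ℝ, (x - t) / s ^ 2 * gpdf t s x = 0 := by
  refine integral_eq_zero_of_hasDerivAt_of_integrable
    (fun y => hasDerivAt_gpdf_x t s hs y) (integrable_D_shift t s hs) ?_
  exact (integrable_gpdf t s hs).neg

lemma integral_max_D_shift (t s : ℝ) (hs : 0 < s) :
    ∫ x : ℝ, max (-((x - t) / s ^ 2 * gpdf t s x)) 0 = (Real.sqrt (2 * Real.pi))⁻¹ * s⁻¹ := by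
  have hb : 0 < (2 * s ^ 2)⁻¹ := by positivity
  have hpt : ∀ x : ℝ, max (-((x - t) / s ^ 2 * gpdf t s x)) 0
      = (Real.sqrt (2 * Real.pi))⁻¹ * s⁻¹ / s ^ 2
        * (max (-(x - t)) 0 * Real.exp (-(x - t) ^ 2 / (2 * s ^ 2))) := by
    intro x
    have hP : 0 < (Real.sqrt (2 * Real.pi))⁻¹ * s⁻¹
        * Real.exp (-(x - t) ^ 2 / (2 * s ^ 2)) := by positivity
    rcases le_total (x - t) 0 with h | h
    · rw [max_eq_left, max_eq_left (neg_nonneg.mpr h)]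
      · unfold gpdf; ring
      · rw [neg_nonneg]
        apply mul_nonpos_of_nonpos_of_nonneg
        · apply div_nonpos_of_nonpos_of_nonneg h (sq_nonneg s)
        · exact le_of_lt (gpdf_pos t s x hs)
      
    · rw [max_eq_right, max_eq_right (neg_nonpos.mpr h)]
      · ring
      · rw [neg_nonpos]
        exact mul_nonneg (div_nonneg h (sq_nonneg s)) (le_of_lt (gpdf_pos t s x hs))
  simp only [hpt]
  rw [MeasureTheory.integral_const_mul]
  have hsub := integral_sub_right_eq_self
    (fun u : ℝ => max (-u) 0 * Real.exp (-u ^ 2 / (2 * s ^ 2))) (μ := volume) t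
  rw [hsub]
  have hneg : (fun u : ℝ => max (-u) 0 * Real.exp (-u ^ 2 / (2 * s ^ 2)))
      = fun u : ℝ => (fun y : ℝ => max y 0 * Real.exp (-y ^ 2 / (2 * s ^ 2))) (-u) := by
    funext u
    simp [neg_sq]
  have hni := MeasureTheory.integral_neg_eq_self
    (fun y : ℝ => max y 0 * Real.exp (-y ^ 2 / (2 * s ^ 2))) volume
  rw [hneg, hni]
  have harg : (fun y : ℝ => max y 0 * Real.exp (-y ^ 2 / (2 * s ^ 2)))
      = fun y : ℝ => max y 0 * Real.exp (-(2 * s ^ 2)⁻¹ * y ^ 2) := by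
    funext y
    congr 1
    ring
  rw [harg, integral_max_exp _ hb]
  field_simp

lemma integral_abs_D_shift (t s : ℝ) (hs : 0 < s) :
    ∫ x : ℝ, |(x - t) / s ^ 2 * gpdf t s x| = Real.sqrt (2 / Real.pi) / s := by
  rw [abs_split _ (integrable_D_shift t s hs), integral_D_shift_zero t s hs,
    integral_max_D_shift t s hs, zero_add, ← two_K]
  ring

lemma shift_L1 (s m₁ m₂ : ℝ) (hs : 0 < s) (h : m₁ ≤ m₂) :
    ∫ x, |gpdf m₂ s x - gpdf m₁ s x| ≤ Real.sqrt (2 / Real.pi) / s * (m₂ - m₁) := by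
  apply L1_le_of_hasDerivAt (fun t x => gpdf t s x)
      (fun t x => (x - t) / s ^ 2 * gpdf t s x) m₁ m₂ h _ (by positivity)
  · intro x t _
    exact hasDerivAt_gpdf_mean s x hs t
  · intro x
    apply Continuous.continuousOn
    simp only [gpdf, div_eq_mul_inv]
    fun_prop
  · simp only [Function.uncurry_def, gpdf, div_eq_mul_inv]
    fun_prop
  · intro t _
    exact integrable_D_shift t s hs
  · intro t _
    exact le_of_eq (integral_abs_D_shift t s hs)
  · exact (integrable_gpdf m₂ s hs).sub (integrable_gpdf m₁ s hs)

lemma hasDerivAt_gpdf_sigma (m x t : ℝ) (ht : 0 < t) :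
    HasDerivAt (fun u => gpdf m u x) (((x - m) ^ 2 - t ^ 2) / t ^ 3 * gpdf m t x) t := by
  have hf : HasDerivAt (fun u : ℝ => (Real.sqrt (2 * Real.pi))⁻¹ * u⁻¹)
      ((Real.sqrt (2 * Real.pi))⁻¹ * (-(t ^ 2)⁻¹)) t :=
    (hasDerivAt_inv ht.ne').const_mul _
  have hd : HasDerivAt (fun u : ℝ => 2 * u ^ 2) (2 * (2 * t ^ 1)) t :=
    (hasDerivAt_pow 2 t).const_mul 2
  have hc : HasDerivAt (fun _ : ℝ => -(x - m) ^ 2) 0 t := hasDerivAt_const t _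
  have he := ((hc.div hd (by positivity)).exp)
  have hprod := hf.mul he
  refine hprod.congr_deriv ?_
  simp only [Pi.neg_apply, Pi.pow_apply, Pi.div_apply]
  unfold gpdf
  field_simp
  ring

lemma integrable_D_scale (m t : ℝ) (ht : 0 < t) :
    Integrable (fun x : ℝ => ((x - m) ^ 2 - t ^ 2) / t ^ 3 * gpdf m t x) := by
  have h1 := (integrable_sq_gauss m t ht).const_mul
    ((Real.sqrt (2 * Real.pi))⁻¹ * t⁻¹ / t ^ 3)
  have h2 := (integrable_exp_gauss m t ht).const_mul
    ((Real.sqrt (2 * Real.pi))⁻¹ * t⁻¹ / t)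
  refine (h1.sub h2).congr ?_
  filter_upwards with x
  simp only [Pi.sub_apply]
  unfold gpdf
  field_simp

lemma hasDerivAt_anti_scale (m t : ℝ) (ht : 0 < t) (x : ℝ) :
    HasDerivAt (fun y => -(y - m) / t * gpdf m t y)
      (((x - m) ^ 2 - t ^ 2) / t ^ 3 * gpdf m t x) x := by
  have h1 : HasDerivAt (fun y : ℝ => y - m) 1 x := (hasDerivAt_id x).sub_const m
  have ha : HasDerivAt (fun y : ℝ => -(y - m) / t) (-1 / t) x := (h1.neg).div_const t
  have h3 := ((h1.pow 2).neg.div_const (2 * t ^ 2)).exp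
  have hb := h3.const_mul ((Real.sqrt (2 * Real.pi))⁻¹ * t⁻¹)
  have hprod := ha.mul hb
  refine hprod.congr_deriv ?_
  simp only [Pi.neg_apply, Pi.pow_apply, Pi.div_apply]
  unfold gpdf
  field_simp
  ring

lemma integral_D_scale_zero (m t : ℝ) (ht : 0 < t) :
    ∫ x : ℝ, ((x - m) ^ 2 - t ^ 2) / t ^ 3 * gpdf m t x = 0 := by
  refine integral_eq_zero_of_hasDerivAt_of_integrable
    (fun x => hasDerivAt_anti_scale m t ht x) (integrable_D_scale m t ht) ?_
  have := (integrable_lin_gauss m t m ht).const_mul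
    (-((Real.sqrt (2 * Real.pi))⁻¹ * t⁻¹ / t))
  refine this.congr ?_
  filter_upwards with x
  unfold gpdf
  field_simp

lemma integral_max_D_scale (m t : ℝ) (ht : 0 < t) :
    ∫ x : ℝ, max (-(((x - m) ^ 2 - t ^ 2) / t ^ 3 * gpdf m t x)) 0
      ≤ 2 * (Real.sqrt (2 * Real.pi))⁻¹ / t := by
  have hptle : ∀ x : ℝ, max (-(((x - m) ^ 2 - t ^ 2) / t ^ 3 * gpdf m t x)) 0
      ≤ indicator (Icc (m - t) (m + t)) (fun _ => (Real.sqrt (2 * Real.pi))⁻¹ / t ^ 2) x := by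
    intro x
    by_cases hx : x ∈ Icc (m - t) (m + t)
    · rw [indicator_of_mem hx]
      rw [mem_Icc] at hx
      apply max_le _ (by positivity)
      have hsq : (x - m) ^ 2 ≤ t ^ 2 := sq_le_sq' (by linarith [hx.1]) (by linarith [hx.2])
      have hE : Real.exp (-(x - m) ^ 2 / (2 * t ^ 2)) ≤ 1 :=
        Real.exp_le_one_iff.mpr (div_nonpos_of_nonpos_of_nonneg
          (neg_nonpos.mpr (sq_nonneg _)) (by positivity))
      have hnum : (0:ℝ) ≤ t ^ 2 - (x - m) ^ 2 := by linarith
      have key : -(((x - m) ^ 2 - t ^ 2) / t ^ 3 * gpdf m t x)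
          = (t ^ 2 - (x - m) ^ 2) / t ^ 3 * gpdf m t x := by ring
      rw [key]
      calc (t ^ 2 - (x - m) ^ 2) / t ^ 3 * gpdf m t x
          ≤ t ^ 2 / t ^ 3 * ((Real.sqrt (2 * Real.pi))⁻¹ * t⁻¹ * 1) := by
            unfold gpdf
            gcongr
            nlinarith [sq_nonneg (x - m)]
        _ = (Real.sqrt (2 * Real.pi))⁻¹ / t ^ 2 := by
            field_simp
    · rw [indicator_of_notMem hx]
      rw [mem_Icc, not_and_or] at hx
      have hsq : t ^ 2 ≤ (x - m) ^ 2 := by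
        rcases hx with h | h <;> push_neg at h <;> nlinarith
      have : 0 ≤ ((x - m) ^ 2 - t ^ 2) / t ^ 3 * gpdf m t x :=
        mul_nonneg (div_nonneg (by linarith) (by positivity)) (gpdf_pos m t x ht).le
      exact max_le (by linarith) le_rfl
  calc ∫ x : ℝ, max (-(((x - m) ^ 2 - t ^ 2) / t ^ 3 * gpdf m t x)) 0
      ≤ ∫ x : ℝ, indicator (Icc (m - t) (m + t))
          (fun _ => (Real.sqrt (2 * Real.pi))⁻¹ / t ^ 2) x := by
        refine integral_mono ?_ ?_ hptle
        · simpa using (integrable_D_scale m t ht).neg.pos_part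
        · exact (integrableOn_const measure_Icc_lt_top.ne).integrable_indicator
            measurableSet_Icc
    _ = 2 * (Real.sqrt (2 * Real.pi))⁻¹ / t := by
        rw [integral_indicator_const _ measurableSet_Icc, Real.volume_real_Icc_of_le (by linarith), smul_eq_mul]
        field_simp
        ring

lemma scale_L1 (m s₁ s₂ : ℝ) (h1 : 0 < s₁) (h : s₁ ≤ s₂) :
    ∫ x, |gpdf m s₂ x - gpdf m s₁ x|
      ≤ 4 * (Real.sqrt (2 * Real.pi))⁻¹ / s₁ * (s₂ - s₁) := by
  have ht0 : ∀ t ∈ Icc s₁ s₂, t ≠ 0 := fun t htt => (lt_of_lt_of_le h1 htt.1).ne'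
  apply L1_le_of_hasDerivAt (fun t x => gpdf m t x)
      (fun t x => ((x - m) ^ 2 - t ^ 2) / t ^ 3 * gpdf m t x) s₁ s₂ h _ (by positivity)
  · intro x t htt
    exact hasDerivAt_gpdf_sigma m x t (lt_of_lt_of_le h1 htt.1)
  · intro x
    unfold gpdf
    apply ContinuousOn.mul
    · exact ContinuousOn.div (by fun_prop) (by fun_prop)
        (fun t htt => pow_ne_zero 3 (ht0 t htt))
    · apply ContinuousOn.mul
      · exact continuousOn_const.mul (continuousOn_id.inv₀ ht0)
      · exact Real.continuous_exp.comp_continuousOn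
          (ContinuousOn.div continuousOn_const (by fun_prop)
            (fun t htt => by
              have := ht0 t htt
              positivity))
  · simp only [Function.uncurry_def, gpdf]
    fun_prop
  · intro t htt
    exact integrable_D_scale m t (lt_of_lt_of_le h1 htt.1)
  · intro t htt
    have htpos : 0 < t := lt_of_lt_of_le h1 htt.1
    rw [abs_split _ (integrable_D_scale m t htpos), integral_D_scale_zero m t htpos, zero_add]
    have h2 := integral_max_D_scale m t htpos
    have h3 : 2 * (Real.sqrt (2 * Real.pi))⁻¹ / t ≤ 2 * (Real.sqrt (2 * Real.pi))⁻¹ / s₁ := by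
      apply div_le_div_of_nonneg_left (by positivity) h1 htt.1
    calc 2 * ∫ x : ℝ, max (-(((x - m) ^ 2 - t ^ 2) / t ^ 3 * gpdf m t x)) 0
        ≤ 2 * (2 * (Real.sqrt (2 * Real.pi))⁻¹ / t) := by linarith
      _ ≤ 4 * (Real.sqrt (2 * Real.pi))⁻¹ / s₁ := by
          rw [show (4:ℝ) * (Real.sqrt (2 * Real.pi))⁻¹ / s₁
            = 2 * (2 * (Real.sqrt (2 * Real.pi))⁻¹ / s₁) by ring]
          linarith
  · exact (integrable_gpdf m s₂ (lt_of_lt_of_le h1 h)).sub (integrable_gpdf m s₁ h1)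

/-- Total variation distance between two (Borel) measures on `ℝ`. -/
noncomputable def tvDist (μ ν : Measure ℝ) : ℝ :=
  ⨆ A : {s : Set ℝ // MeasurableSet s}, |(μ A.1).toReal - (ν A.1).toReal|

lemma tvDist_comm (μ ν : Measure ℝ) : tvDist μ ν = tvDist ν μ := by
  unfold tvDist
  simp_rw [abs_sub_comm]

lemma var_ne (s : ℝ) (hs : 0 < s) : (⟨s ^ 2, sq_nonneg s⟩ : NNReal) ≠ 0 := by
  refine fun hc => (pow_ne_zero 2 hs.ne') ?_
  exact congrArg Subtype.val hc

lemma integral_gpdf_one (m s : ℝ) (hs : 0 < s) : ∫ x, gpdf m s x = 1 := by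
  rw [← gpdf_eq m s hs]
  exact integral_gaussianPDFReal_eq_one m (var_ne s hs)

lemma gauss_apply_toReal (m s : ℝ) (hs : 0 < s) {A : Set ℝ} :
    ((gaussianReal m ⟨s ^ 2, sq_nonneg s⟩) A).toReal = ∫ x in A, gpdf m s x := by
  rw [gaussianReal_apply_eq_integral m (var_ne s hs) A, gpdf_eq m s hs,
    ENNReal.toReal_ofReal]
  exact integral_nonneg fun x => le_of_lt (gpdf_pos m s x hs)

lemma tv_le (m1 s1 m2 s2 : ℝ) (hs1 : 0 < s1) (hs2 : 0 < s2) :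
    tvDist (gaussianReal m1 ⟨s1 ^ 2, sq_nonneg s1⟩) (gaussianReal m2 ⟨s2 ^ 2, sq_nonneg s2⟩)
      ≤ (∫ x, |gpdf m1 s1 x - gpdf m2 s2 x|) / 2 := by
  haveI : Nonempty {s : Set ℝ // MeasurableSet s} := ⟨⟨∅, MeasurableSet.empty⟩⟩
  apply ciSup_le
  rintro ⟨A, hA⟩
  rw [gauss_apply_toReal m1 s1 hs1, gauss_apply_toReal m2 s2 hs2]
  exact abs_diff_le_half (integrable_gpdf m1 s1 hs1) (integrable_gpdf m2 s2 hs2)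
    (by rw [integral_gpdf_one m1 s1 hs1, integral_gpdf_one m2 s2 hs2]) hA

lemma shift_L1' (s m₁ m₂ : ℝ) (hs : 0 < s) :
    ∫ x, |gpdf m₁ s x - gpdf m₂ s x| ≤ Real.sqrt (2 / Real.pi) / s * |m₁ - m₂| := by
  rcases le_total m₁ m₂ with h | h
  · have heq : (fun x => |gpdf m₁ s x - gpdf m₂ s x|)
        = fun x => |gpdf m₂ s x - gpdf m₁ s x| := funext fun x => abs_sub_comm _ _
    rw [heq, abs_sub_comm m₁ m₂, abs_of_nonneg (by linarith)]
    exact shift_L1 s m₁ m₂ hs h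
  · rw [abs_of_nonneg (by linarith : (0:ℝ) ≤ m₁ - m₂)]
    exact shift_L1 s m₂ m₁ hs h

lemma main_le (μ₁ μ₂ σ₁ σ₂ : ℝ) (hσ₁ : 0 < σ₁) (hσ₂ : 0 < σ₂) (hle : σ₁ ≤ σ₂) :
    tvDist (gaussianReal μ₁ ⟨σ₁ ^ 2, sq_nonneg σ₁⟩) (gaussianReal μ₂ ⟨σ₂ ^ 2, sq_nonneg σ₂⟩)
      ≤ Real.sqrt (2 / Real.pi)
        * (|μ₁ - μ₂| / (2 * max σ₁ σ₂) + max σ₁ σ₂ / min σ₁ σ₂ - 1) := by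
  rw [max_eq_right hle, min_eq_left hle]
  have i11 := integrable_gpdf μ₁ σ₁ hσ₁
  have i12 := integrable_gpdf μ₁ σ₂ hσ₂
  have i22 := integrable_gpdf μ₂ σ₂ hσ₂
  have step1 := tv_le μ₁ σ₁ μ₂ σ₂ hσ₁ hσ₂
  have tri := L1_tri (gpdf μ₁ σ₁) (gpdf μ₁ σ₂) (gpdf μ₂ σ₂) i11 i12 i22
  have hscale : ∫ x, |gpdf μ₁ σ₁ x - gpdf μ₁ σ₂ x|
      ≤ 4 * (Real.sqrt (2 * Real.pi))⁻¹ / σ₁ * (σ₂ - σ₁) := by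
    have heq : (fun x => |gpdf μ₁ σ₁ x - gpdf μ₁ σ₂ x|)
        = fun x => |gpdf μ₁ σ₂ x - gpdf μ₁ σ₁ x| := funext fun x => abs_sub_comm _ _
    rw [heq]
    exact scale_L1 μ₁ σ₁ σ₂ hσ₁ hle
  have hshift := shift_L1' σ₂ μ₁ μ₂ hσ₂
  have harith : (4 * (Real.sqrt (2 * Real.pi))⁻¹ / σ₁ * (σ₂ - σ₁)
        + Real.sqrt (2 / Real.pi) / σ₂ * |μ₁ - μ₂|) / 2
      = Real.sqrt (2 / Real.pi) * (|μ₁ - μ₂| / (2 * σ₂) + σ₂ / σ₁ - 1) := by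
    rw [← two_K]
    field_simp
    ring
  linarith

/-- For normal laws `N(μᵢ, σᵢ²)`,
`d_TV(N(μ₁,σ₁²), N(μ₂,σ₂²)) ≤ √(2/π)·(|μ₁-μ₂|/(2 max(σ₁,σ₂)) + max(σ₁,σ₂)/min(σ₁,σ₂) - 1)`. -/
theorem stmt11 (μ₁ μ₂ : ℝ) (σ₁ σ₂ : ℝ) (hσ₁ : 0 < σ₁) (hσ₂ : 0 < σ₂) :
    tvDist (gaussianReal μ₁ ⟨σ₁ ^ 2, sq_nonneg σ₁⟩) (gaussianReal μ₂ ⟨σ₂ ^ 2, sq_nonneg σ₂⟩)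
      ≤ Real.sqrt (2 / Real.pi)
        * (|μ₁ - μ₂| / (2 * max σ₁ σ₂) + max σ₁ σ₂ / min σ₁ σ₂ - 1) := by
  rcases le_total σ₁ σ₂ with hle | hle
  · exact main_le μ₁ μ₂ σ₁ σ₂ hσ₁ hσ₂ hle
  · rw [tvDist_comm, abs_sub_comm μ₁ μ₂, max_comm σ₁ σ₂, min_comm σ₁ σ₂]
    exact main_le μ₂ μ₁ σ₂ σ₁ hσ₂ hσ₁ hle
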